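/- For every class-KL function β there exist class-K∞ functions θ₁ and θ₂ such that β(r, t) ≤ θ₁(θ₂(r)·e^{-t}) for all r, t ≥ 0. -/

import Mathlib

/-- A function of class `K`: continuous, strictly increasing on `[0,∞)`, zero at zero. -/
def ClassK (f : ℝ → ℝ) : Prop :=
  ContinuousOn f (Set.Ici 0) ∧ StrictMonoOn f (Set.Ici 0) ∧ f 0 = 0

/-- A function of class `K∞`: class `K` and unbounded. -/
def ClassKInf (f : ℝ → ℝ) : Prop :=
  ClassK f ∧ Filter.Tendsto f Filter.atTop Filter.atTop

/-- A function of class `KL`. -/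
def ClassKL (β : ℝ → ℝ → ℝ) : Prop :=
  (∀ t, 0 ≤ t → ClassK (fun r => β r t)) ∧
  (∀ r, 0 ≤ r → AntitoneOn (fun t => β r t) (Set.Ici 0) ∧
    Filter.Tendsto (fun t => β r t) Filter.atTop (nhds 0))

open Filter Set Real intervalIntegral
set_option linter.unusedSectionVars false
set_option linter.unusedVariables false

section
variable (β : ℝ → ℝ → ℝ)

/-- last time at which β r · is still ≥ v -/
noncomputable def tau (r v : ℝ) : ℝ := sSup {t : ℝ | 0 ≤ t ∧ v ≤ β r t}

noncomputable def Vc : ℝ := max 1 (β 1 0)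

noncomputable def aa (n : ℕ) (v : ℝ) : ℝ :=
  if v ≤ 1/((n:ℝ)+1) then Real.exp (tau β ((n:ℝ)+1) (1/((n:ℝ)+1)) - tau β ((n:ℝ)+1) v) else 1

noncomputable def bb (n : ℕ) (v : ℝ) : ℝ :=
  if v ≤ β (1/((n:ℝ)+1)) 0 then (1/(((n:ℝ)+2) * Vc β)) * Real.exp (-(tau β (1/((n:ℝ)+1)) v)) else 1

noncomputable def II (v : ℝ) : ℝ := ⨅ j : ℕ, min (aa β j v) (bb β j v)

noncomputable def Φ (v : ℝ) : ℝ := min (max v 0) (II β v)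

noncomputable def ρ (v : ℝ) : ℝ := ∫ t in (0:ℝ)..v, Φ β t
end

section
variable {β : ℝ → ℝ → ℝ} (hβ : ClassKL β)
include hβ

lemma beta_nonneg {r t : ℝ} (hr : 0 ≤ r) (ht : 0 ≤ t) : 0 ≤ β r t := by
  have h0 : β 0 t = 0 := (hβ.1 t ht).2.2
  rcases eq_or_lt_of_le hr with h | h
  · rw [← h, h0]
  · rw [← h0]
    exact le_of_lt ((hβ.1 t ht).2.1 (le_refl (0:ℝ)) hr h)

lemma beta_mono_r {r r' t : ℝ} (hr : 0 ≤ r) (hrr : r ≤ r') (ht : 0 ≤ t) : β r t ≤ β r' t :=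
  ((hβ.1 t ht).2.1.monotoneOn) hr (hr.trans hrr) hrr

lemma beta_anti_t {r t t' : ℝ} (hr : 0 ≤ r) (ht : 0 ≤ t) (htt : t ≤ t') :
    β r t' ≤ β r t :=
  (hβ.2 r hr).1 ht (ht.trans htt) htt

lemma tau_nonneg (r v : ℝ) : 0 ≤ tau β r v :=
  Real.sSup_nonneg (fun x hx => hx.1)

lemma tau_bddAbove {r v : ℝ} (hr : 0 ≤ r) (hv : 0 < v) :
    BddAbove {t : ℝ | 0 ≤ t ∧ v ≤ β r t} := by
  have h := (hβ.2 r hr).2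
  have h2 : ∀ᶠ t in atTop, β r t < v := h.eventually (eventually_lt_nhds hv)
  rcases h2.exists_forall_of_atTop with ⟨T, hT⟩
  refine ⟨T, fun t ht => ?_⟩
  by_contra hc
  push_neg at hc
  exact absurd ht.2 (not_le.2 (hT t hc.le))


lemma le_tau {r v t : ℝ} (hr : 0 ≤ r) (hv : 0 < v) (ht : 0 ≤ t) (hvt : v ≤ β r t) :
    t ≤ tau β r v :=
  le_csSup (tau_bddAbove hβ hr hv) ⟨ht, hvt⟩

lemma tau_anti {r v v' : ℝ} (hr : 0 ≤ r) (hv : 0 < v) (hvv : v ≤ v') :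
    tau β r v' ≤ tau β r v := by
  rcases Set.eq_empty_or_nonempty {t : ℝ | 0 ≤ t ∧ v' ≤ β r t} with h | h
  · rw [tau, h, Real.sSup_empty]; exact tau_nonneg hβ r v
  · exact csSup_le_csSup (tau_bddAbove hβ hr hv) h
      (fun t ht => ⟨ht.1, hvv.trans ht.2⟩)

lemma Vc_pos : 0 < Vc β := lt_of_lt_of_le one_pos (le_max_left _ _)

lemma aa_pos (j : ℕ) (v : ℝ) : 0 < aa β j v := by
  unfold aa; split <;> positivity

lemma bb_pos (j : ℕ) (v : ℝ) : 0 < bb β j v := by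
  unfold bb; split
  · have := Vc_pos hβ; positivity
  · exact one_pos

lemma aa_mono {v v' : ℝ} (j : ℕ) (hv : 0 < v) (hvv : v ≤ v') : aa β j v ≤ aa β j v' := by
  have hn : (0:ℝ) < (j:ℝ)+1 := by positivity
  have hn0 : (0:ℝ) ≤ (j:ℝ)+1 := hn.le
  have hq : (0:ℝ) < 1/((j:ℝ)+1) := by positivity
  unfold aa
  split <;> split
  · have := tau_anti hβ hn0 hv hvv
    exact Real.exp_le_exp.2 (by linarith)
  · next h h' =>
    have h2 : tau β ((j:ℝ)+1) (1/((j:ℝ)+1)) ≤ tau β ((j:ℝ)+1) v :=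
      tau_anti hβ hn0 hv h
    exact Real.exp_le_one_iff.2 (by linarith)
  · next h h' => exact absurd (hvv.trans h') h
  · exact le_refl 1

lemma bb_mono {v v' : ℝ} (j : ℕ) (hv : 0 < v) (hvv : v ≤ v') : bb β j v ≤ bb β j v' := by
  have hV := Vc_pos hβ
  have hc1 : 1/(((j:ℝ)+2) * Vc β) ≤ 1 := by
    rw [div_le_one (by positivity)]
    calc (1:ℝ) = 1 * 1 := (one_mul 1).symm
    _ ≤ ((j:ℝ)+2) * Vc β := by
        apply mul_le_mul (by linarith [Nat.cast_nonneg (α := ℝ) j]) (le_max_left _ _) one_pos.le (by positivity)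
  have hg : (0:ℝ) ≤ 1/((j:ℝ)+1) := by positivity
  unfold bb
  split <;> split
  · next h h' =>
    have := tau_anti hβ hg hv hvv
    apply mul_le_mul_of_nonneg_left (Real.exp_le_exp.2 (by linarith)) (by positivity)
  · next h h' =>
    calc 1/(((j:ℝ)+2) * Vc β) * Real.exp (-(tau β (1/((j:ℝ)+1)) v))
        ≤ 1 * 1 := mul_le_mul hc1 (Real.exp_le_one_iff.2 (neg_nonpos.2 (tau_nonneg hβ _ _))) (Real.exp_pos _).le one_pos.le
    _ = 1 := one_mul 1
  · next h h' => exact absurd (hvv.trans h') h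
  · exact le_refl 1

lemma II_nonneg (v : ℝ) : 0 ≤ II β v :=
  le_ciInf (fun j => le_min (aa_pos hβ j v).le (bb_pos hβ j v).le)

lemma II_bddBelow (v : ℝ) : BddBelow (Set.range (fun j => min (aa β j v) (bb β j v))) :=
  ⟨0, by rintro x ⟨j, rfl⟩; exact le_min (aa_pos hβ j v).le (bb_pos hβ j v).le⟩

lemma II_le (j : ℕ) (v : ℝ) : II β v ≤ min (aa β j v) (bb β j v) :=
  ciInf_le (II_bddBelow hβ v) j

lemma II_mono {v v' : ℝ} (hv : 0 < v) (hvv : v ≤ v') : II β v ≤ II β v' :=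
  ciInf_mono (II_bddBelow hβ v) (fun j =>
    min_le_min (aa_mono hβ j hv hvv) (bb_mono hβ j hv hvv))

lemma w_tendsto : Tendsto (fun j : ℕ => β (1/((j:ℝ)+1)) 0) atTop (nhds 0) := by
  have hc : ContinuousWithinAt (fun r => β r 0) (Set.Ici 0) 0 :=
    (hβ.1 0 le_rfl).1 0 (Set.self_mem_Ici)
  have h0 : β 0 0 = 0 := (hβ.1 0 le_rfl).2.2
  have ht : Tendsto (fun j : ℕ => 1/((j:ℝ)+1)) atTop (nhdsWithin 0 (Set.Ici 0)) := by
    apply tendsto_nhdsWithin_of_tendsto_nhds_of_eventually_within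
    · exact tendsto_one_div_add_atTop_nhds_zero_nat
    · exact Eventually.of_forall (fun j => Set.mem_Ici.2 (by positivity))
  have := hc.tendsto.comp ht
  rwa [h0] at this

lemma II_pos {v : ℝ} (hv : 0 < v) : 0 < II β v := by
  have h1 : ∀ᶠ j : ℕ in atTop, β (1/((j:ℝ)+1)) 0 < v :=
    (w_tendsto hβ).eventually (eventually_lt_nhds hv)
  have h2 : ∀ᶠ j : ℕ in atTop, 1/((j:ℝ)+1) < v := by
    have := tendsto_one_div_add_atTop_nhds_zero_nat.eventually (eventually_lt_nhds hv)
    exact this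
  rcases (h1.and h2).exists_forall_of_atTop with ⟨J, hJ⟩
  set c := (Finset.range (J+1)).inf' (by simp) (fun j => min (aa β j v) (bb β j v)) with hc
  have hcpos : 0 < c := by
    rw [hc, Finset.lt_inf'_iff]
    exact fun j _ => lt_min (aa_pos hβ j v) (bb_pos hβ j v)
  rw [II]
  refine lt_of_lt_of_le (lt_min hcpos one_pos) (le_ciInf (fun j => ?_))
  rcases le_or_gt j J with h | h
  · exact le_trans (min_le_left _ _)
      (Finset.inf'_le _ (Finset.mem_range.2 (Nat.lt_succ_of_le h)))
  · have hj := hJ j h.le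
    have ha : aa β j v = 1 := by
      unfold aa; rw [if_neg (not_le.2 hj.2)]
    have hb : bb β j v = 1 := by
      unfold bb; rw [if_neg (not_le.2 hj.1)]
    rw [ha, hb, min_self]
    exact min_le_right _ _

lemma II_one {v : ℝ} (hv : Vc β < v) : II β v = 1 := by
  have hV := Vc_pos hβ
  have h : ∀ j : ℕ, min (aa β j v) (bb β j v) = 1 := by
    intro j
    have hj1 : (1:ℝ) ≤ (j:ℝ)+1 := by linarith [Nat.cast_nonneg (α := ℝ) j]
    have h1 : 1/((j:ℝ)+1) < v := lt_of_le_of_lt (by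
      rw [div_le_one (by positivity)]; exact hj1) (lt_of_le_of_lt (le_max_left _ _) hv)
    have h2 : β (1/((j:ℝ)+1)) 0 < v := by
      refine lt_of_le_of_lt ?_ (lt_of_le_of_lt (le_max_right 1 (β 1 0)) hv)
      apply beta_mono_r hβ (by positivity) _ le_rfl
      rw [div_le_one (by positivity)]; exact hj1
    unfold aa bb
    rw [if_neg (not_le.2 h1), if_neg (not_le.2 h2), min_self]
  unfold II
  rw [funext h]
  exact ciInf_const

lemma Φ_nonneg (v : ℝ) : 0 ≤ Φ β v :=
  le_min (le_max_right _ _) (II_nonneg hβ v)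

lemma Φ_mono : Monotone (Φ β) := by
  intro v v' hvv
  rcases le_or_gt v 0 with h | h
  · have : Φ β v = 0 := le_antisymm (le_trans (min_le_left _ _) (by simp [h])) (Φ_nonneg hβ v)
    rw [this]; exact Φ_nonneg hβ v'
  · exact min_le_min (max_le_max hvv le_rfl) (II_mono hβ h hvv)

lemma Φ_pos {v : ℝ} (hv : 0 < v) : 0 < Φ β v :=
  lt_min (by simp [hv]) (II_pos hβ hv)

lemma Φ_le_self {v : ℝ} (hv : 0 ≤ v) : Φ β v ≤ v :=
  le_trans (min_le_left _ _) (by simp [hv])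

lemma Φ_one {v : ℝ} (hv : Vc β + 1 ≤ v) : Φ β v = 1 := by
  have hV := Vc_pos hβ
  rw [Φ, II_one hβ (by linarith), min_eq_right]
  rw [max_eq_left (by linarith)]; linarith

lemma Φ_intInt (x y : ℝ) : IntervalIntegrable (Φ β) MeasureTheory.volume x y :=
  (Φ_mono hβ).intervalIntegrable

lemma ρ_cont : Continuous (ρ β) :=
  intervalIntegral.continuous_primitive (fun a b => Φ_intInt hβ a b) 0

lemma ρ_mono : Monotone (ρ β) := by
  intro x y hxy
  have h : ρ β y - ρ β x = ∫ t in x..y, Φ β t := by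
    rw [ρ, ρ, ← intervalIntegral.integral_interval_sub_left (Φ_intInt hβ 0 y) (Φ_intInt hβ 0 x)]
  have h2 : 0 ≤ ∫ t in x..y, Φ β t :=
    intervalIntegral.integral_nonneg hxy (fun t _ => Φ_nonneg hβ t)
  linarith

lemma ρ_zero : ρ β 0 = 0 := intervalIntegral.integral_same

lemma ρ_sub {x y : ℝ} : ρ β y - ρ β x = ∫ t in x..y, Φ β t := by
  rw [ρ, ρ, ← intervalIntegral.integral_interval_sub_left (Φ_intInt hβ 0 y) (Φ_intInt hβ 0 x)]

lemma ρ_strict : StrictMonoOn (ρ β) (Set.Ici 0) := by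
  intro x hx y hy hxy
  rw [Set.mem_Ici] at hx
  set m := (x + y)/2 with hm
  have hxm : x ≤ m := by rw [hm]; linarith
  have hmy : m ≤ y := by rw [hm]; linarith
  have hmpos : 0 < m := by rw [hm]; linarith [lt_of_le_of_lt hx hxy]
  have h1 : ρ β y - ρ β x = ∫ t in x..y, Φ β t := ρ_sub hβ
  have hsplit : (∫ t in x..y, Φ β t) = (∫ t in x..m, Φ β t) + ∫ t in m..y, Φ β t :=
    (intervalIntegral.integral_add_adjacent_intervals (Φ_intInt hβ x m) (Φ_intInt hβ m y)).symm
  have h2 : 0 ≤ ∫ t in x..m, Φ β t :=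
    intervalIntegral.integral_nonneg hxm (fun t _ => Φ_nonneg hβ t)
  have h3 : (y - m) * Φ β m ≤ ∫ t in m..y, Φ β t := by
    have := intervalIntegral.integral_mono_on hmy (_root_.intervalIntegrable_const (c := Φ β m))
      (Φ_intInt hβ m y) (fun t ht => Φ_mono hβ ht.1)
    simpa using this
  have h4 : 0 < (y - m) * Φ β m := mul_pos (by linarith) (Φ_pos hβ hmpos)
  linarith

lemma ρ_le {v : ℝ} (hv : 0 ≤ v) : ρ β v ≤ v * Φ β v := by
  have h : (∫ t in (0:ℝ)..v, Φ β t) ≤ ∫ t in (0:ℝ)..v, Φ β v := by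
    apply intervalIntegral.integral_mono_on hv (Φ_intInt hβ 0 v)
      (_root_.intervalIntegrable_const)
    exact fun t ht => Φ_mono hβ ht.2
  simpa [ρ] using h

lemma ρ_nonneg {v : ℝ} (hv : 0 ≤ v) : 0 ≤ ρ β v := by
  rw [← ρ_zero hβ]
  exact ρ_mono hβ hv

lemma ρ_growth {v : ℝ} (hv : Vc β + 1 ≤ v) : v - (Vc β + 1) ≤ ρ β v := by
  have hV := Vc_pos hβ
  have h1 : ρ β v - ρ β (Vc β + 1) = ∫ t in (Vc β + 1)..v, Φ β t := ρ_sub hβ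
  have h2 : (v - (Vc β + 1)) * 1 ≤ ∫ t in (Vc β + 1)..v, Φ β t := by
    have := intervalIntegral.integral_mono_on hv (_root_.intervalIntegrable_const (c := (1:ℝ)))
      (Φ_intInt hβ _ v) (fun t ht => (Φ_one hβ ht.1).ge)
    simpa using this
  have h3 : 0 ≤ ρ β (Vc β + 1) := ρ_nonneg hβ (by linarith)
  linarith

lemma ρ_tendsto : Tendsto (ρ β) atTop atTop := by
  apply tendsto_atTop_mono' atTop
    (Filter.eventually_atTop.2 ⟨Vc β + 1, fun v hv => ρ_growth hβ hv⟩)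
  exact tendsto_atTop_add_const_right _ _ tendsto_id

lemma ρt_eq {x : ℝ} (hx : 0 ≤ x) : min x 0 + ρ β (max x 0) = ρ β x := by
  rw [min_eq_right hx, max_eq_left hx, zero_add]

lemma ρt_strict : StrictMono (fun v => min v 0 + ρ β (max v 0)) := by
  intro x y hxy
  dsimp only
  rcases le_or_gt 0 x with hx | hx
  · rw [ρt_eq hβ hx, ρt_eq hβ (hx.trans hxy.le)]
    exact ρ_strict hβ hx (hx.trans hxy.le) hxy
  · rcases le_or_gt 0 y with hy | hy
    · rw [ρt_eq hβ hy]
      have : min x 0 + ρ β (max x 0) = x := by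
        rw [min_eq_left hx.le, max_eq_right hx.le, ρ_zero hβ, add_zero]
      rw [this]
      exact lt_of_lt_of_le hx (ρ_nonneg hβ hy)
    · simp only [min_eq_left hx.le, min_eq_left hy.le, max_eq_right hx.le, max_eq_right hy.le]
      exact add_lt_add_left hxy _

lemma ρt_cont : Continuous (fun v => min v 0 + ρ β (max v 0)) :=
  (continuous_id.min continuous_const).add
    ((ρ_cont hβ).comp (continuous_id.max continuous_const))

lemma ρt_surj : Function.Surjective (fun v => min v 0 + ρ β (max v 0)) := by
  apply Continuous.surjective (ρt_cont hβ)
  · apply Tendsto.congr' (f₁ := ρ β)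
    · filter_upwards [Filter.eventually_ge_atTop (0:ℝ)] with x hx
      exact (ρt_eq hβ hx).symm
    · exact ρ_tendsto hβ
  · apply Tendsto.congr' (f₁ := id)
    · filter_upwards [Filter.eventually_le_atBot (0:ℝ)] with x hx
      simp [min_eq_left hx, max_eq_right hx, ρ_zero hβ]
    · exact tendsto_id

noncomputable def eIso : ℝ ≃o ℝ :=
  StrictMono.orderIsoOfSurjective _ (ρt_strict hβ) (ρt_surj hβ)

lemma eIso_apply (x : ℝ) : eIso hβ x = min x 0 + ρ β (max x 0) := rfl

lemma eIso_symm_rho {x : ℝ} (hx : 0 ≤ x) : (eIso hβ).symm (ρ β x) = x := by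
  rw [← ρt_eq hβ hx]
  exact (eIso hβ).symm_apply_apply x

lemma theta1_classKInf : ClassKInf (fun y => (eIso hβ).symm y) := by
  refine ⟨⟨?_, ?_, ?_⟩, ?_⟩
  · exact (OrderIso.continuous (eIso hβ).symm).continuousOn
  · exact ((eIso hβ).symm.strictMono).strictMonoOn _
  · have : ρ β 0 = 0 := ρ_zero hβ
    have h := eIso_symm_rho hβ (le_refl (0:ℝ))
    rwa [this] at h
  · apply tendsto_atTop_atTop_of_monotone ((eIso hβ).symm.monotone)
    exact fun b => ⟨eIso hβ b, by simp⟩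

noncomputable def MM (n : ℕ) : ℝ :=
  max (Vc β) (ρ β (β ((n:ℝ)+1) 0)) * Real.exp (tau β ((n:ℝ)+1) (1/((n:ℝ)+1)))

lemma MM_pos (n : ℕ) : 0 < MM (β:=β) n :=
  mul_pos (lt_of_lt_of_le (Vc_pos hβ) (le_max_left _ _)) (Real.exp_pos _)

noncomputable def ψf (s : ℝ) : ℝ := ∑ k ∈ Finset.range (⌊s⌋₊ + 3), MM (β:=β) k

lemma ψf_nonneg (s : ℝ) : 0 ≤ ψf (β:=β) s :=
  Finset.sum_nonneg (fun k _ => (MM_pos hβ k).le)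

lemma ψf_mono : Monotone (ψf (β:=β)) := by
  intro x y hxy
  apply Finset.sum_le_sum_of_subset_of_nonneg
  · exact Finset.range_subset_range.2 (by have := Nat.floor_le_floor hxy; omega)
  · exact fun k _ _ => (MM_pos hβ k).le

lemma ψf_intInt (x y : ℝ) : IntervalIntegrable (ψf (β:=β)) MeasureTheory.volume x y :=
  (ψf_mono hβ).intervalIntegrable

noncomputable def θ₂f (r : ℝ) : ℝ := r + ∫ s in (0:ℝ)..r, ψf (β:=β) s

lemma θ₂f_int_mono : Monotone (fun r => ∫ s in (0:ℝ)..r, ψf (β:=β) s) := by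
  intro x y hxy
  have h : (∫ s in (0:ℝ)..y, ψf (β:=β) s) - ∫ s in (0:ℝ)..x, ψf (β:=β) s = ∫ s in x..y, ψf (β:=β) s := by
    rw [← intervalIntegral.integral_interval_sub_left (ψf_intInt hβ 0 y) (ψf_intInt hβ 0 x)]
  have h2 : 0 ≤ ∫ s in x..y, ψf (β:=β) s :=
    intervalIntegral.integral_nonneg hxy (fun t _ => ψf_nonneg hβ t)
  linarith

lemma θ₂f_ge_id {r : ℝ} (hr : 0 ≤ r) : r ≤ θ₂f (β:=β) r := by
  have h : 0 ≤ ∫ s in (0:ℝ)..r, ψf (β:=β) s :=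
    intervalIntegral.integral_nonneg hr (fun t _ => ψf_nonneg hβ t)
  rw [θ₂f]; linarith

lemma θ₂f_classKInf : ClassKInf (θ₂f (β:=β)) := by
  refine ⟨⟨?_, ?_, ?_⟩, ?_⟩
  · exact (continuous_id.add
      (intervalIntegral.continuous_primitive (fun a b => ψf_intInt hβ a b) 0)).continuousOn
  · intro x _ y _ hxy
    exact add_lt_add_of_lt_of_le hxy (θ₂f_int_mono hβ hxy.le)
  · rw [θ₂f, intervalIntegral.integral_same, add_zero]
  · apply tendsto_atTop_mono'  atTop
      (Filter.eventually_atTop.2 ⟨0, fun v hv => θ₂f_ge_id hβ hv⟩) tendsto_id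

lemma θ₂f_ge_M {r : ℝ} (hr : 1 ≤ r) : MM (β:=β) (⌈r⌉₊ - 1) ≤ θ₂f (β:=β) r := by
  have h0 : (0:ℝ) ≤ r - 1 := by linarith
  have h1 : (∫ s in (0:ℝ)..r, ψf (β:=β) s) = (∫ s in (0:ℝ)..(r-1), ψf (β:=β) s) + ∫ s in (r-1)..r, ψf (β:=β) s :=
    (intervalIntegral.integral_add_adjacent_intervals (ψf_intInt hβ 0 (r-1)) (ψf_intInt hβ (r-1) r)).symm
  have h2 : 0 ≤ ∫ s in (0:ℝ)..(r-1), ψf (β:=β) s :=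
    intervalIntegral.integral_nonneg h0 (fun t _ => ψf_nonneg hβ t)
  have h3 : (r - (r-1)) * ψf (β:=β) (r-1) ≤ ∫ s in (r-1)..r, ψf (β:=β) s := by
    have := intervalIntegral.integral_mono_on (by linarith : r - 1 ≤ r)
      (_root_.intervalIntegrable_const (c := ψf (β:=β) (r-1)))
      (ψf_intInt hβ (r-1) r) (fun t ht => ψf_mono hβ ht.1)
    simpa using this
  have h4 : MM (β:=β) (⌈r⌉₊ - 1) ≤ ψf (β:=β) (r-1) := by
    apply Finset.single_le_sum (f := fun k => MM (β:=β) k) (fun k _ => (MM_pos hβ k).le)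
    rw [Finset.mem_range]
    have hceil : ⌈r⌉₊ ≤ ⌊r⌋₊ + 1 := Nat.ceil_le_floor_add_one r
    have hfloor : ⌊r⌋₊ ≤ ⌊r-1⌋₊ + 1 := by
      have : (⌊r⌋₊ : ℕ) = ⌊(r-1)+1⌋₊ := by norm_num
      rw [this, Nat.floor_add_one h0]
    omega
  have h5 : r - (r-1) = 1 := by ring
  rw [θ₂f]
  rw [h5, one_mul] at h3
  have : (0:ℝ) ≤ r := by linarith
  linarith

lemma key_small {r t : ℝ} (hr : 0 < r) (hr1 : r ≤ 1) (ht : 0 ≤ t) :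
    ρ β (β r t) ≤ θ₂f (β:=β) r * Real.exp (-t) := by
  have hV := Vc_pos hβ
  set m := ⌊1/r⌋₊ with hm
  have hm1 : 1 ≤ m := Nat.le_floor (by rw [Nat.cast_one, le_div_iff₀ hr, one_mul]; exact hr1)
  have hmr : (m:ℝ) ≤ 1/r := Nat.floor_le (by positivity)
  have hmpos : (0:ℝ) < (m:ℝ) := by exact_mod_cast hm1
  set j := m - 1 with hj
  have hj1 : (j:ℝ) + 1 = (m:ℝ) := by
    rw [hj]; push_cast [Nat.cast_sub hm1]; ring
  set g := 1/(m:ℝ) with hg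
  have hgpos : 0 < g := by positivity
  have hrg : r ≤ g := by
    rw [hg, le_div_iff₀ hmpos]
    calc r * m ≤ r * (1/r) := by
          apply mul_le_mul_of_nonneg_left hmr hr.le
    _ = 1 := by field_simp
  have hg1 : g ≤ 1 := by rw [hg, div_le_one hmpos]; exact_mod_cast hm1
  set v := β g t with hv
  have hv0 : 0 ≤ v := beta_nonneg hβ hgpos.le ht
  have hρm : ρ β (β r t) ≤ ρ β v :=
    ρ_mono hβ (beta_mono_r hβ hr.le hrg ht)
  have hrθ : r ≤ θ₂f (β:=β) r := θ₂f_ge_id hβ hr.le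
  rcases eq_or_lt_of_le hv0 with hveq | hvpos
  · rw [← hveq] at hρm
    rw [ρ_zero hβ] at hρm
    have h0 : 0 ≤ θ₂f (β:=β) r := le_trans hr.le hrθ
    have : 0 ≤ θ₂f (β:=β) r * Real.exp (-t) := by positivity
    linarith
  · -- v > 0
    have hvw : v ≤ β g 0 := beta_anti_t hβ hgpos.le le_rfl ht
    have hvV : v ≤ Vc β := by
      refine le_trans hvw (le_trans (beta_mono_r hβ hgpos.le hg1 le_rfl) (le_max_right 1 _))
    have h1 : ρ β v ≤ Vc β * Φ β v := by
      refine le_trans (ρ_le hβ hv0) ?_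
      exact mul_le_mul_of_nonneg_right hvV (Φ_nonneg hβ v)
    have h2 : Φ β v ≤ bb β j v :=
      le_trans (min_le_right _ _) (le_trans (II_le hβ j v) (min_le_right _ _))
    have hbb : bb β j v = (1/(((j:ℝ)+2) * Vc β)) * Real.exp (-(tau β g v)) := by
      rw [bb, hj1, ← hg, if_pos hvw]
    have htau : t ≤ tau β g v := le_tau hβ hgpos.le hvpos ht (le_of_eq hv)
    have h3 : bb β j v ≤ (1/((j:ℝ)+2)) * (1/Vc β) * Real.exp (-t) := by
      rw [hbb]
      have : (1:ℝ)/(((j:ℝ)+2) * Vc β) = (1/((j:ℝ)+2)) * (1/Vc β) := by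
        field_simp
      rw [this]
      apply mul_le_mul_of_nonneg_left (Real.exp_le_exp.2 (by linarith)) (by positivity)
    have h4 : (1:ℝ)/((j:ℝ)+2) ≤ r := by
      have hlt : 1/r < (m:ℝ) + 1 := by exact_mod_cast Nat.lt_floor_add_one (1/r)
      have : (j:ℝ) + 2 = (m:ℝ) + 1 := by linarith [hj1]
      rw [this, div_le_iff₀ (by linarith)]
      rw [div_lt_iff₀ hr] at hlt
      linarith
    calc ρ β (β r t) ≤ ρ β v := hρm
    _ ≤ Vc β * ((1/((j:ℝ)+2)) * (1/Vc β) * Real.exp (-t)) := by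
        refine le_trans h1 (mul_le_mul_of_nonneg_left (le_trans h2 h3) hV.le)
    _ = (1/((j:ℝ)+2)) * Real.exp (-t) := by field_simp
    _ ≤ θ₂f (β:=β) r * Real.exp (-t) := by
        apply mul_le_mul_of_nonneg_right (by linarith) (Real.exp_pos _).le

lemma key_large {r t : ℝ} (hr : 1 < r) (ht : 0 ≤ t) :
    ρ β (β r t) ≤ θ₂f (β:=β) r * Real.exp (-t) := by
  have hV := Vc_pos hβ
  set n := ⌈r⌉₊ with hn
  have hn1 : 1 ≤ n := Nat.one_le_ceil_iff.2 (by linarith)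
  have hrn : r ≤ (n:ℝ) := Nat.le_ceil r
  have hnpos : (0:ℝ) < (n:ℝ) := by exact_mod_cast hn1
  set j := n - 1 with hj
  have hj1 : (j:ℝ) + 1 = (n:ℝ) := by
    rw [hj]; push_cast [Nat.cast_sub hn1]; ring
  set q := 1/((j:ℝ)+1) with hq
  have hqpos : 0 < q := by rw [hq, hj1]; positivity
  have hq1 : q ≤ 1 := by
    rw [hq, hj1, div_le_one hnpos]; exact_mod_cast hn1
  set v := β (n:ℝ) t with hv
  have hv0 : 0 ≤ v := beta_nonneg hβ hnpos.le ht
  have hρm : ρ β (β r t) ≤ ρ β v :=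
    ρ_mono hβ (beta_mono_r hβ (by linarith) hrn ht)
  have hMθ : MM (β:=β) j ≤ θ₂f (β:=β) r := by
    have := θ₂f_ge_M hβ hr.le
    rwa [← hn, ← hj] at this
  have hMpos : 0 < MM (β:=β) j := MM_pos hβ j
  have hMM : MM (β:=β) j = max (Vc β) (ρ β (β ((j:ℝ)+1) 0)) * Real.exp (tau β ((j:ℝ)+1) q) := by
    rw [MM, hq]
  rcases eq_or_lt_of_le hv0 with hveq | hvpos
  · rw [← hveq, ρ_zero hβ] at hρm
    have h0 : 0 ≤ θ₂f (β:=β) r := le_trans (by linarith) (θ₂f_ge_id hβ (by linarith))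
    have : 0 ≤ θ₂f (β:=β) r * Real.exp (-t) := by positivity
    linarith
  · have hsuff : ρ β v ≤ MM (β:=β) j * Real.exp (-t) := by
      rcases le_or_gt v q with hvq | hqv
      · -- small v : use aa
        have h1 : ρ β v ≤ Vc β * Φ β v := by
          refine le_trans (ρ_le hβ hv0) ?_
          exact mul_le_mul_of_nonneg_right (le_trans hvq (le_trans hq1 (le_max_left 1 _)))
            (Φ_nonneg hβ v)
        have h2 : Φ β v ≤ aa β j v :=
          le_trans (min_le_right _ _) (le_trans (II_le hβ j v) (min_le_left _ _))
        have haa : aa β j v = Real.exp (tau β ((j:ℝ)+1) q - tau β ((j:ℝ)+1) v) := by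
          rw [aa, ← hq, if_pos hvq]
        have htau : t ≤ tau β ((j:ℝ)+1) v := by
          rw [hj1]
          exact le_tau hβ hnpos.le hvpos ht (le_of_eq hv)
        calc ρ β v ≤ Vc β * Real.exp (tau β ((j:ℝ)+1) q - tau β ((j:ℝ)+1) v) := by
              refine le_trans h1 (mul_le_mul_of_nonneg_left (by rw [← haa]; exact h2) hV.le)
        _ ≤ Vc β * (Real.exp (tau β ((j:ℝ)+1) q) * Real.exp (-t)) := by
              rw [← Real.exp_add]
              exact mul_le_mul_of_nonneg_left (Real.exp_le_exp.2 (by linarith)) hV.le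
        _ = Vc β * Real.exp (tau β ((j:ℝ)+1) q) * Real.exp (-t) := by ring
        _ ≤ MM (β:=β) j * Real.exp (-t) := by
              rw [hMM]
              apply mul_le_mul_of_nonneg_right _ (Real.exp_pos _).le
              exact mul_le_mul_of_nonneg_right (le_max_left _ _) (Real.exp_pos _).le
      · -- large v
        have hvw : v ≤ β ((j:ℝ)+1) 0 := by
          rw [hj1]
          exact beta_anti_t hβ hnpos.le le_rfl ht
        have h1 : ρ β v ≤ ρ β (β ((j:ℝ)+1) 0) := ρ_mono hβ hvw
        have htau : t ≤ tau β ((j:ℝ)+1) q := by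
          refine le_tau hβ (by rw [hj1]; exact hnpos.le) hqpos ht ?_
          rw [hj1]; exact hqv.le
        have hexp : (1:ℝ) ≤ Real.exp (tau β ((j:ℝ)+1) q - t) :=
          Real.one_le_exp (by linarith)
        calc ρ β v ≤ max (Vc β) (ρ β (β ((j:ℝ)+1) 0)) := le_trans h1 (le_max_right _ _)
        _ = max (Vc β) (ρ β (β ((j:ℝ)+1) 0)) * 1 := (mul_one _).symm
        _ ≤ max (Vc β) (ρ β (β ((j:ℝ)+1) 0)) * Real.exp (tau β ((j:ℝ)+1) q - t) := by
              apply mul_le_mul_of_nonneg_left hexp (le_trans hV.le (le_max_left _ _))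
        _ = MM (β:=β) j * Real.exp (-t) := by
              rw [hMM, mul_assoc, ← Real.exp_add, sub_eq_add_neg]
    refine le_trans hρm (le_trans hsuff ?_)
    exact mul_le_mul_of_nonneg_right hMθ (Real.exp_pos _).le

lemma key {r t : ℝ} (hr : 0 ≤ r) (ht : 0 ≤ t) :
    ρ β (β r t) ≤ θ₂f (β:=β) r * Real.exp (-t) := by
  rcases eq_or_lt_of_le hr with h0 | h0
  · have hb : β 0 t = 0 := (hβ.1 t ht).2.2
    have hθ : θ₂f (β:=β) (0:ℝ) = 0 := by
      rw [θ₂f, intervalIntegral.integral_same, add_zero]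
    rw [← h0, hb, ρ_zero hβ, hθ, zero_mul]
  · rcases le_or_gt r 1 with h1 | h1
    · exact key_small hβ h0 h1 ht
    · exact key_large hβ h1 ht

end

/-- For every class-KL function β there exist class-K∞ functions θ₁, θ₂ such that
β(r,t) ≤ θ₁(θ₂(r)·e^{-t}) for all r, t ≥ 0. -/
theorem stmt1 (β : ℝ → ℝ → ℝ) (hβ : ClassKL β) :
    ∃ θ₁ θ₂ : ℝ → ℝ, ClassKInf θ₁ ∧ ClassKInf θ₂ ∧
      ∀ r t : ℝ, 0 ≤ r → 0 ≤ t → β r t ≤ θ₁ (θ₂ r * Real.exp (-t)) := by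
  refine ⟨fun y => (eIso hβ).symm y, θ₂f (β:=β), theta1_classKInf hβ, θ₂f_classKInf hβ, ?_⟩
  intro r t hr ht
  have hb0 : 0 ≤ β r t := beta_nonneg hβ hr ht
  have h1 : (eIso hβ).symm (ρ β (β r t)) = β r t := eIso_symm_rho hβ hb0
  have h2 := key hβ hr ht
  calc β r t = (eIso hβ).symm (ρ β (β r t)) := h1.symm
  _ ≤ (eIso hβ).symm (θ₂f (β:=β) r * Real.exp (-t)) := (eIso hβ).symm.monotone h2
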